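/- arXiv:2107.07750 — 4 statements merged into one kernel-verified Lean document; each statement's English description precedes it below -/
import Mathlib

section
/- Let X be a nonempty set, m ∈ ℕ, (A_j)_{j=1,…,m} a partition of X, and for each j let k_j be a kernel on A_j and λ_j > 0. Define k : X × X → ℝ by k(x, y) := Σ_{j=1}^m λ_j^{−1} 𝟙_{A_j}(x) k_j(x, y) 𝟙_{A_j}(y). Then k is a kernel on X, and its RKHS is the space H of functions f : X → ℝ with f|_{A_j} ∈ H_j for all j, equipped with the inner product ⟨f, g⟩_H = Σ_{j=1}^m λ_j ⟨f|_{A_j}, g|_{A_j}⟩_{H_j}, where H_j is the RKHS of k_j. In particular, for every f ∈ H and x ∈ X one has ⟨f, k(x,·)⟩_H = f(x). -/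
open scoped RealInnerProductSpace

set_option synthInstance.maxHeartbeats 1000000

/-- A witness that `k` is a kernel: a real Hilbert space together with a feature map `Φ`
with `k x y = ⟪Φ x, Φ y⟫`. -/
structure KernelWitness {X : Type} (k : X → X → ℝ) : Type 1 where
  H : Type
  [ng : NormedAddCommGroup H]
  [ip : InnerProductSpace ℝ H]
  [cs : CompleteSpace H]
  Φ : X → H
  feat : ∀ x y, k x y = ⟪Φ x, Φ y⟫

/-- The localized kernel `k(x,y) = ∑_j λ_j⁻¹ 𝟙_{A_j}(x) k_j(x,y) 𝟙_{A_j}(y)` built from a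
partition `(A_j)` of `X` and RKHSs `H_j` on the cells is a kernel; the function `k(x,·)`
restricted to each cell is represented in `H_j`; and the reproducing property
`⟨f, k(x,·)⟩_H = f(x)` holds for the inner product `⟨f, g⟩_H = ∑_j λ_j ⟨f|_{A_j}, g|_{A_j}⟩`.
Here the RKHS `H_j` of `k_j` is given by a Hilbert space `H j` of functions on `A_j` via an
injective linear evaluation `ev j` with reproducing elements `K j x` for `x ∈ A_j`, so that
`k_j x y = ev j (K j y) x`. -/
theorem localized_kernel {X : Type} [Nonempty X] (m : ℕ)
    (P : Fin m → Set X) (hP : ∀ x : X, ∃! j, x ∈ P j)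
    (lam : Fin m → ℝ) (hlam : ∀ j, 0 < lam j)
    (H : Fin m → Type) [∀ j, NormedAddCommGroup (H j)] [∀ j, InnerProductSpace ℝ (H j)]
    [∀ j, CompleteSpace (H j)]
    (ev : ∀ j, H j → X → ℝ) (hlin : ∀ j, IsLinearMap ℝ (ev j))
    (hinj : ∀ j, Function.Injective (ev j))
    (K : ∀ j, X → H j)
    (hrepro : ∀ (j) (f : H j) (x : X), x ∈ P j → ev j f x = ⟪f, K j x⟫)
    (k : X → X → ℝ)
    (hk : k = fun x y => ∑ j, (lam j)⁻¹ *
      (P j).indicator (fun y' => (P j).indicator (fun x' => ev j (K j y') x') x) y) :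
    -- `k` is a kernel on `X`
    Nonempty (KernelWitness k) ∧
    -- `k(x,·)` restricted to each cell `A_j` belongs to `H_j`
    (∀ (x : X) (j : Fin m), ∃ g : H j, ∀ y ∈ P j, k x y = ev j g y) ∧
    -- reproducing property: for `f` with `f|_{A_j} = ev j (g j)`,
    -- `⟨f, k(x,·)⟩_H = ∑_j λ_j ⟨g_j, (k(x,·))|_{A_j}⟩_{H_j} = f(x)`
    (∀ (g : ∀ j, H j) (x : X) (j₀ : Fin m), x ∈ P j₀ →
      ∑ j, lam j * ⟪g j, (P j).indicator (fun x' => (lam j)⁻¹ • K j x') x⟫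
        = ev j₀ (g j₀) x) := by
  have hcs : CompleteSpace (PiLp 2 H) := inferInstance
  refine ⟨?_, ?_, ?_⟩
  · refine ⟨{ H := PiLp 2 H
              cs := hcs
              Φ := fun x => WithLp.toLp 2 fun j => (P j).indicator
                (fun x' => (Real.sqrt (lam j))⁻¹ • K j x') x
              feat := ?_ }⟩
    intro x y
    rw [hk, PiLp.inner_apply]
    simp only [WithLp.ofLp_toLp]
    refine Finset.sum_congr rfl fun j _ => ?_
    by_cases hx : x ∈ P j
    · by_cases hy : y ∈ P j
      · simp only [Set.indicator_of_mem hx, Set.indicator_of_mem hy,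
          real_inner_smul_left, real_inner_smul_right]
        rw [hrepro j (K j y) x hx, real_inner_comm]
        rw [← mul_assoc, ← mul_inv]
        rw [Real.mul_self_sqrt (hlam j).le]
      · simp [Set.indicator_of_notMem hy]
    · simp [Set.indicator_of_notMem hx]
  · intro x j
    refine ⟨(P j).indicator (fun x' => (lam j)⁻¹ • K j x') x, fun y hy => ?_⟩
    simp only [hk]
    obtain ⟨j', _, huniq⟩ := hP y
    have hj : ∀ i, i ≠ j → y ∉ P i := by
      intro i hi hyi
      exact hi ((huniq i hyi).trans (huniq j hy).symm)
    rw [Finset.sum_eq_single j]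
    · rw [Set.indicator_of_mem hy]
      by_cases hx : x ∈ P j
      · rw [Set.indicator_of_mem hx, Set.indicator_of_mem hx, (hlin j).map_smul,
          hrepro j (K j y) x hx, real_inner_comm]
        simp only [Pi.smul_apply, smul_eq_mul]
        rw [hrepro j (K j x) y hy]
      · simp [Set.indicator_of_notMem hx, (hlin j).map_zero]
    · intro i _ hi
      rw [Set.indicator_of_notMem (hj i hi), mul_zero]
    · exact fun h => absurd (Finset.mem_univ j) h
  · intro g x j₀ hx
    have hj : ∀ i, i ≠ j₀ → x ∉ P i := by
      intro i hi hxi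
      obtain ⟨j', _, huniq⟩ := hP x
      exact hi ((huniq i hxi).trans (huniq j₀ hx).symm)
    rw [Finset.sum_eq_single j₀]
    · rw [Set.indicator_of_mem hx, real_inner_smul_right, hrepro j₀ (g j₀) x hx]
      rw [← mul_assoc, mul_inv_cancel₀ (hlam j₀).ne', one_mul]
    · intro i _ hi
      rw [Set.indicator_of_notMem (hj i hi), inner_zero_right, mul_zero]
    · exact fun h => absurd (Finset.mem_univ j₀) h
end

section
/- Let (X, dist) be a finite metric space V = {v_1,…,v_n} ⊆ ℝ^d with Euclidean distance, and let k ≤ n. The farthest first traversal algorithm initializes C = {v_1} and repeatedly adds a point of V \ C at maximum distance to C until |C| = k. Then the resulting set C is a 2-approximation of the metric k-center problem: max_{v∈V} min_{c∈C} ‖v − c‖ ≤ 2 · min_{C'⊆V, |C'|=k} max_{v∈V} min_{c∈C'} ‖v − c‖. -/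
open Finset

/-- The farthest first traversal produces a 2-approximation of the metric `k`-center problem:
if `c 0 = v 1` and each subsequent center `c (i+1)` is a point of `V \ {c 0, …, c i}` at maximum
distance to the already chosen centers, then for every `C' ⊆ V` with `|C'| = k` we have
`max_{v ∈ V} min_{c ∈ C} ‖v - c‖ ≤ 2 · max_{v ∈ V} min_{c' ∈ C'} ‖v - c'‖`. -/
theorem fft_two_approximation {d n k : ℕ} (hn : 0 < n) (hk : 0 < k) (hkn : k ≤ n)
    (x : Fin n → EuclideanSpace ℝ (Fin d))
    (c : ℕ → EuclideanSpace ℝ (Fin d))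
    (hc0 : c 0 = x ⟨0, hn⟩)
    (hmem : ∀ i, i + 1 < k →
      (∃ j : Fin n, c (i + 1) = x j) ∧ ∀ j ≤ i, c (i + 1) ≠ c j)
    (hfar : ∀ i, i + 1 < k → ∀ j : Fin n, (∀ j' ≤ i, x j ≠ c j') →
      (Finset.range (i + 1)).inf' (Finset.nonempty_range_iff.mpr (Nat.succ_ne_zero i))
          (fun j' => dist (x j) (c j'))
        ≤ (Finset.range (i + 1)).inf' (Finset.nonempty_range_iff.mpr (Nat.succ_ne_zero i))
          (fun j' => dist (c (i + 1)) (c j')))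
    (C' : Finset (EuclideanSpace ℝ (Fin d)))
    (hC'sub : ∀ y ∈ C', ∃ j : Fin n, y = x j)
    (hC'card : C'.card = k) :
    (Finset.univ.sup' (Finset.univ_nonempty_iff.mpr ⟨⟨0, hn⟩⟩)
        fun j : Fin n => (Finset.range k).inf' (Finset.nonempty_range_iff.mpr hk.ne')
          fun j' => dist (x j) (c j'))
      ≤ 2 * Finset.univ.sup' (Finset.univ_nonempty_iff.mpr ⟨⟨0, hn⟩⟩)
        (fun j : Fin n => C'.inf' (Finset.card_pos.mp (hC'card ▸ hk))
          fun y => dist (x j) y) := by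
  classical
  have hC'ne : C'.Nonempty := Finset.card_pos.mp (hC'card ▸ hk)
  have hune : (Finset.univ : Finset (Fin n)).Nonempty :=
    Finset.univ_nonempty_iff.mpr ⟨⟨0, hn⟩⟩
  set R := Finset.univ.sup' hune
      (fun j : Fin n => C'.inf' hC'ne fun y => dist (x j) y) with hRdef
  have hR0 : 0 ≤ R := by
    have h1 : (0:ℝ) ≤ C'.inf' hC'ne fun y => dist (x ⟨0, hn⟩) y :=
      Finset.le_inf' _ _ fun b _ => dist_nonneg
    exact h1.trans (Finset.le_sup' (fun j : Fin n => C'.inf' hC'ne fun y => dist (x j) y)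
      (Finset.mem_univ _))
  have hnear : ∀ j : Fin n, ∃ y ∈ C', dist (x j) y ≤ R := by
    intro j
    obtain ⟨y, hy, hmin⟩ := Finset.exists_mem_eq_inf' hC'ne (fun y => dist (x j) y)
    exact ⟨y, hy, by
      rw [← hmin]
      exact Finset.le_sup' (fun j : Fin n => C'.inf' hC'ne fun y => dist (x j) y)
        (Finset.mem_univ j)⟩
  apply Finset.sup'_le
  intro j0 _
  by_contra hcon
  push_neg at hcon
  have hfarpt : ∀ j' < k, 2 * R < dist (x j0) (c j') := fun j' hj' =>
    lt_of_lt_of_le hcon (Finset.inf'_le _ (Finset.mem_range.mpr hj'))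
  have hne0 : ∀ j' < k, x j0 ≠ c j' := by
    intro j' hj' h
    have := hfarpt j' hj'
    rw [h, dist_self] at this
    nlinarith
  set q : ℕ → EuclideanSpace ℝ (Fin d) := fun i => if i < k then c i else x j0 with hq
  have hqx : ∀ i ≤ k, ∃ j : Fin n, q i = x j := by
    intro i hi
    rcases lt_or_eq_of_le hi with hlt | rfl
    · rw [show q i = c i from if_pos hlt]
      rcases i with _ | m
      · exact ⟨⟨0, hn⟩, hc0⟩
      · exact (hmem m hlt).1
    · exact ⟨j0, if_neg (lt_irrefl _)⟩
  have pair : ∀ i i' : ℕ, i < i' → i' ≤ k → 2 * R < dist (q i') (q i) := by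
    intro i i' hii hik
    have hik' : i < k := by omega
    have hqi : q i = c i := if_pos hik'
    rcases lt_or_eq_of_le hik with hlt | rfl
    · obtain ⟨m, rfl⟩ : ∃ m, i' = m + 1 := ⟨i' - 1, by omega⟩
      have hstep := hfar m hlt j0 (fun j' hj' => hne0 j' (by omega))
      have h1 : 2 * R < (Finset.range (m + 1)).inf'
          (Finset.nonempty_range_iff.mpr (Nat.succ_ne_zero m))
          (fun j' => dist (x j0) (c j')) := by
        apply (Finset.lt_inf'_iff _).mpr
        intro b hb
        exact hfarpt b (by have := Finset.mem_range.mp hb; omega)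
      have h3 : (Finset.range (m + 1)).inf'
          (Finset.nonempty_range_iff.mpr (Nat.succ_ne_zero m))
          (fun j' => dist (c (m + 1)) (c j')) ≤ dist (c (m + 1)) (c i) :=
        Finset.inf'_le _ (Finset.mem_range.mpr (by omega))
      rw [show q (m + 1) = c (m + 1) from if_pos hlt, hqi]
      exact lt_of_lt_of_le (lt_of_lt_of_le h1 hstep) h3
    · rw [show q i' = x j0 from if_neg (lt_irrefl _), hqi]
      exact hfarpt i hik'
  have hg : ∀ i : Fin (k + 1), ∃ y ∈ C', dist (q (i : ℕ)) y ≤ R := by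
    intro i
    obtain ⟨j, hj⟩ := hqx i (by omega)
    rw [hj]; exact hnear j
  choose g hgmem hgdist using hg
  obtain ⟨i, -, i', -, hne', heq⟩ :
      ∃ i ∈ (Finset.univ : Finset (Fin (k + 1))), ∃ i' ∈ Finset.univ, i ≠ i' ∧ g i = g i' := by
    apply Finset.exists_ne_map_eq_of_card_lt_of_maps_to (t := C')
    · simp [hC'card]
    · intro i _; exact hgmem i
  have key : ∀ a b : Fin (k + 1), (a : ℕ) < (b : ℕ) → g a = g b → False := by
    intro a b hab hgab
    have h1 := pair a b hab (by omega)
    have h2 : dist (q (b : ℕ)) (q (a : ℕ)) ≤ dist (q (b : ℕ)) (g b) + dist (g a) (q (a : ℕ)) := by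
      rw [hgab]; exact dist_triangle _ _ _
    have h3 : dist (g a) (q (a : ℕ)) ≤ R := by rw [dist_comm]; exact hgdist a
    have h4 := hgdist b
    linarith
  rcases lt_or_gt_of_ne hne' with h' | h'
  · exact key i i' h' heq
  · exact key i' i h' heq.symm
end

section
/- Let μ be a probability measure on ℝ^d with support S, and assume there exist constants C_μ ≥ 1 and δ > 0 such that μ(B_r(x)) ≥ C_μ^{−1} r^δ for all x ∈ S and all 0 < r ≤ diam S. Let m ∈ ℕ and let ε_m(S) denote the m-th entropy number of S. Then for all τ with ε_m(S) < τ ≤ ε_m(S) + diam S, the probability under μ^n that an i.i.d. sample x_1,…,x_n satisfies sup_{x∈S} min_{i≤n} ‖x_i − x‖ > τ is at most m·exp(−C_μ^{−1}(τ − ε_m(S))^δ n). -/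
open Metric MeasureTheory

/-- The `m`-th entropy number of a set `S ⊆ ℝ^d`: the infimum over all `ε > 0` such that
there are `m` points of `S` whose closed `ε`-balls cover `S`. -/
noncomputable def entropyNumber {d : ℕ} (S : Set (EuclideanSpace ℝ (Fin d))) (m : ℕ) : ℝ :=
  sInf {ε : ℝ | 0 < ε ∧ ∃ x : Fin m → EuclideanSpace ℝ (Fin d),
    (∀ j, x j ∈ S) ∧ S ⊆ ⋃ j, closedBall (x j) ε}

/-- The (topological) support of a measure `μ` on `ℝ^d`: the set of points all of whose
neighborhoods have positive measure. -/
def measureSupport {d : ℕ} (μ : Measure (EuclideanSpace ℝ (Fin d))) :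
    Set (EuclideanSpace ℝ (Fin d)) :=
  {x | ∀ r : ℝ, 0 < r → 0 < μ (ball x r)}

/-- If `μ` is a probability measure with support `S` satisfying `μ(B_r(x)) ≥ C_μ⁻¹ r^δ` for all
`x ∈ S` and `0 < r ≤ diam S`, then for `ε_m(S) < τ ≤ ε_m(S) + diam S` the probability that an
i.i.d. sample `x_1, …, x_n` satisfies `sup_{x ∈ S} min_i ‖x_i − x‖ > τ` is at most
`m · exp(−C_μ⁻¹ (τ − ε_m(S))^δ n)`. -/
theorem covering_by_sample {d : ℕ} (μ : Measure (EuclideanSpace ℝ (Fin d)))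
    [IsProbabilityMeasure μ]
    (S : Set (EuclideanSpace ℝ (Fin d))) (hS : S = measureSupport μ)
    (Cμ δ : ℝ) (hC : 1 ≤ Cμ) (hδ : 0 < δ)
    (hlow : ∀ x ∈ S, ∀ r : ℝ, 0 < r → r ≤ Metric.diam S →
      ENNReal.ofReal (Cμ⁻¹ * r ^ δ) ≤ μ (closedBall x r))
    (m n : ℕ) (hm : 0 < m) (τ : ℝ)
    (hτ1 : entropyNumber S m < τ) (hτ2 : τ ≤ entropyNumber S m + Metric.diam S) :
    (Measure.pi fun _ : Fin n => μ)
        {ω : Fin n → EuclideanSpace ℝ (Fin d) | ∃ s ∈ S, ∀ i, τ < dist (ω i) s}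
      ≤ ENNReal.ofReal
          ((m : ℝ) * Real.exp (-(Cμ⁻¹ * (τ - entropyNumber S m) ^ δ * n))) := by
  set ε := entropyNumber S m with hεdef
  rcases S.eq_empty_or_nonempty with hSe | ⟨s0, hs0⟩
  · have : {ω : Fin n → EuclideanSpace ℝ (Fin d) | ∃ s ∈ S, ∀ i, τ < dist (ω i) s} = ∅ := by
      simp [hSe]
    rw [this, measure_empty]
    exact zero_le
  · have hdiam_pos : 0 < Metric.diam S := by linarith
    have hbdd : Bornology.IsBounded S := by
      by_contra h
      have := Metric.diam_eq_zero_of_unbounded h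
      linarith
    have hset_ne : Metric.diam S ∈ {ε : ℝ | 0 < ε ∧ ∃ x : Fin m → EuclideanSpace ℝ (Fin d),
        (∀ j, x j ∈ S) ∧ S ⊆ ⋃ j, closedBall (x j) ε} := by
      refine ⟨hdiam_pos, fun _ => s0, fun _ => hs0, fun y hy => ?_⟩
      exact Set.mem_iUnion.2 ⟨⟨0, hm⟩,
        Metric.mem_closedBall.2 (Metric.dist_le_diam_of_mem hbdd hy hs0)⟩
    have hcov : ∀ η, ε < η → ∃ x : Fin m → EuclideanSpace ℝ (Fin d),
        (∀ j, x j ∈ S) ∧ S ⊆ ⋃ j, closedBall (x j) η := by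
      intro η hη
      obtain ⟨η', ⟨_, x, hxS, hxcov⟩, hη'⟩ :=
        exists_lt_of_csInf_lt (Set.nonempty_of_mem hset_ne) hη
      exact ⟨x, hxS, hxcov.trans (Set.iUnion_mono fun j =>
        Metric.closedBall_subset_closedBall hη'.le)⟩
    have key : ∀ η, ε < η → η < τ →
        (Measure.pi fun _ : Fin n => μ)
            {ω : Fin n → EuclideanSpace ℝ (Fin d) | ∃ s ∈ S, ∀ i, τ < dist (ω i) s}
          ≤ ENNReal.ofReal ((m : ℝ) * Real.exp (-(Cμ⁻¹ * (τ - η) ^ δ * n))) := by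
      intro η hη1 hη2
      obtain ⟨x, hxS, hxcov⟩ := hcov η hη1
      set ρ := τ - η with hρ
      have hρ0 : 0 < ρ := by simp only [hρ]; linarith
      have hρd : ρ ≤ Metric.diam S := by simp only [hρ]; linarith
      set a := Cμ⁻¹ * ρ ^ δ with ha
      have ha0 : 0 ≤ a := mul_nonneg (inv_nonneg.2 (by linarith)) (Real.rpow_nonneg hρ0.le δ)
      have hmeas_ball : ∀ j, ENNReal.ofReal a ≤ μ (closedBall (x j) ρ) :=
        fun j => hlow _ (hxS j) ρ hρ0 hρd
      have ha1 : a ≤ 1 :=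
        ENNReal.ofReal_le_one.1 ((hmeas_ball ⟨0, hm⟩).trans prob_le_one)
      have hincl : {ω : Fin n → EuclideanSpace ℝ (Fin d) | ∃ s ∈ S, ∀ i, τ < dist (ω i) s} ⊆
          ⋃ j, Set.univ.pi (fun _ : Fin n => (closedBall (x j) ρ)ᶜ) := by
        rintro ω ⟨s, hsS, hω⟩
        obtain ⟨j, hj⟩ : ∃ j, s ∈ closedBall (x j) η := by
          simpa using hxcov hsS
        refine Set.mem_iUnion.2 ⟨j, fun i _ => ?_⟩
        simp only [Set.mem_compl_iff, Metric.mem_closedBall, not_le]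
        have h1 : τ < dist (ω i) s := hω i
        have h2 : dist s (x j) ≤ η := hj
        have h3 := dist_triangle (ω i) (x j) s
        have h4 := dist_comm (x j) s
        simp only [hρ]
        linarith
      have hcompl : ∀ j : Fin m, μ ((closedBall (x j) ρ)ᶜ) ≤ ENNReal.ofReal (1 - a) := by
        intro j
        rw [measure_compl measurableSet_closedBall (measure_ne_top μ _), measure_univ,
          ENNReal.ofReal_sub _ ha0, ENNReal.ofReal_one]
        exact tsub_le_tsub_left (hmeas_ball j) 1
      have hprod : ∀ j : Fin m,
          (Measure.pi fun _ : Fin n => μ) (Set.univ.pi fun _ : Fin n => (closedBall (x j) ρ)ᶜ)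
            ≤ ENNReal.ofReal (Real.exp (-(a * n))) := by
        intro j
        rw [Measure.pi_pi]
        calc ∏ i : Fin n, μ ((closedBall (x j) ρ)ᶜ)
            ≤ ∏ i : Fin n, ENNReal.ofReal (1 - a) :=
              Finset.prod_le_prod' fun i _ => hcompl j
          _ = ENNReal.ofReal (1 - a) ^ n := by simp [Finset.prod_const]
          _ = ENNReal.ofReal ((1 - a) ^ n) := (ENNReal.ofReal_pow (by linarith) n).symm
          _ ≤ ENNReal.ofReal (Real.exp (-a) ^ n) := by
              apply ENNReal.ofReal_le_ofReal
              exact pow_le_pow_left₀ (by linarith) (by linarith [Real.add_one_le_exp (-a)]) n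
          _ = ENNReal.ofReal (Real.exp (-(a * n))) := by
              rw [← Real.exp_nat_mul]; ring_nf
      calc (Measure.pi fun _ : Fin n => μ)
              {ω : Fin n → EuclideanSpace ℝ (Fin d) | ∃ s ∈ S, ∀ i, τ < dist (ω i) s}
          ≤ (Measure.pi fun _ : Fin n => μ)
              (⋃ j, Set.univ.pi fun _ : Fin n => (closedBall (x j) ρ)ᶜ) :=
            measure_mono hincl
        _ ≤ ∑' j : Fin m, (Measure.pi fun _ : Fin n => μ)
              (Set.univ.pi fun _ : Fin n => (closedBall (x j) ρ)ᶜ) := measure_iUnion_le _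
        _ ≤ ∑' j : Fin m, ENNReal.ofReal (Real.exp (-(a * n))) := ENNReal.tsum_le_tsum hprod
        _ = (m : ENNReal) * ENNReal.ofReal (Real.exp (-(a * n))) := by
            rw [tsum_fintype]; simp [Finset.sum_const, mul_comm]
        _ = ENNReal.ofReal ((m : ℝ) * Real.exp (-(a * n))) := by
            rw [ENNReal.ofReal_mul (by positivity), ENNReal.ofReal_natCast]
        _ = ENNReal.ofReal ((m : ℝ) * Real.exp (-(Cμ⁻¹ * (τ - η) ^ δ * n))) := rfl
    -- limiting step
    have hev : ∀ᶠ η in nhdsWithin ε (Set.Ioi ε),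
        (Measure.pi fun _ : Fin n => μ)
            {ω : Fin n → EuclideanSpace ℝ (Fin d) | ∃ s ∈ S, ∀ i, τ < dist (ω i) s}
          ≤ ENNReal.ofReal ((m : ℝ) * Real.exp (-(Cμ⁻¹ * (τ - η) ^ δ * n))) := by
      filter_upwards [Ioo_mem_nhdsGT_of_mem (Set.left_mem_Ico.2 hτ1)] with η hη
      exact key η hη.1 hη.2
    have hcont : Filter.Tendsto
        (fun η : ℝ => ENNReal.ofReal ((m : ℝ) * Real.exp (-(Cμ⁻¹ * (τ - η) ^ δ * n))))
        (nhdsWithin ε (Set.Ioi ε))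
        (nhds (ENNReal.ofReal ((m : ℝ) * Real.exp (-(Cμ⁻¹ * (τ - ε) ^ δ * n))))) := by
      apply Filter.Tendsto.mono_left _ nhdsWithin_le_nhds
      apply ContinuousAt.tendsto
      apply ENNReal.continuous_ofReal.continuousAt.comp
      apply ContinuousAt.mul continuousAt_const
      apply Real.continuous_exp.continuousAt.comp
      apply ContinuousAt.neg
      apply ContinuousAt.mul _ continuousAt_const
      apply ContinuousAt.mul continuousAt_const
      exact ContinuousAt.rpow_const (by fun_prop) (Or.inr hδ.le)
    exact ge_of_tendsto hcont hev
end

section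
/- Let X be a set partitioned into measurable cells A_1,…,A_m, and for each j let H_j be an RKHS on A_j with kernel k_j and λ_j > 0. Suppose for some constants a_1,…,a_m > 0 and q > 0 the dyadic entropy numbers satisfy e_i(id : H_j → ℓ_∞(A_j ∩ S)) ≤ a_j i^{−1/q} for all i ∈ ℕ and j, for some S ⊆ X. Let H be the localized RKHS of functions f with f|_{A_j} ∈ H_j and ‖f‖_H² = Σ_j λ_j ‖f|_{A_j}‖²_{H_j}. Then e_i(id : H → ℓ_∞(S)) ≤ (3 log 4)^{1/q} (Σ_{j=1}^m (a_j/√λ_j)^q)^{1/q} · i^{−1/q} for all i ∈ ℕ. -/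
/-- The `i`-th dyadic entropy number (in the sup-norm over `S`) of a class `F` of real-valued
functions on `X`: the infimum over `ε > 0` such that `F` can be covered by `2^(i-1)` balls of
radius `ε` in `ℓ_∞(S)`. -/
noncomputable def funEntropy {X : Type*} (S : Set X) (F : Set (X → ℝ)) (i : ℕ) : ℝ :=
  sInf {ε : ℝ | 0 < ε ∧ ∃ φ : Fin (2 ^ (i - 1)) → (X → ℝ),
    ∀ f ∈ F, ∃ c, ∀ x ∈ S, |f x - φ c x| ≤ ε}

lemma sum_indicator_eval {X : Type*} {m : ℕ} (P : Fin m → Set X)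
    (hP : ∀ x : X, ∃! j, x ∈ P j) (h : Fin m → X → ℝ) {x : X} {j₀ : Fin m} (hx : x ∈ P j₀) :
    ∑ j, (P j).indicator (h j) x = h j₀ x := by
  rw [Finset.sum_eq_single j₀]
  · exact Set.indicator_of_mem hx _
  · intro j _ hne
    apply Set.indicator_of_notMem
    intro hxj
    exact hne ((hP x).unique hxj hx)
  · intro habs
    exact absurd (Finset.mem_univ j₀) habs

lemma bound_of_cover {X : Type*} {D : Set X} {H : Type*} [NormedAddCommGroup H]
    [InnerProductSpace ℝ H] (ev : H → X → ℝ) (hlin : IsLinearMap ℝ ev)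
    {N : ℕ} (hN : 0 < N) (φ : Fin N → X → ℝ) {ε : ℝ} (hε : 0 < ε)
    (hcov : ∀ f ∈ {f | ∃ g : H, ‖g‖ ≤ 1 ∧ f = ev g}, ∃ c, ∀ x ∈ D, |f x - φ c x| ≤ ε) :
    ∀ g : H, ‖g‖ ≤ 1 → ∀ x ∈ D, |ev g x| ≤ 2 * N * ε := by
  intro g hg x hx
  by_contra hv
  push_neg at hv
  set v := ev g x with hvdef
  have hNR : (0:ℝ) < N := by exact_mod_cast hN
  have ht : ∀ k : Fin (N+1), |(2 * (k:ℝ) - N) / N| ≤ 1 := by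
    intro k
    rw [abs_div, abs_of_pos hNR, div_le_one hNR, abs_le]
    have hk1 : (k:ℝ) ≤ N := by exact_mod_cast Nat.lt_succ_iff.mp k.isLt
    have hk0 : (0:ℝ) ≤ (k:ℝ) := Nat.cast_nonneg _
    constructor <;> nlinarith
  have hmem : ∀ k : Fin (N+1),
      ev (((2 * (k:ℝ) - N) / N) • g) ∈ {f | ∃ g : H, ‖g‖ ≤ 1 ∧ f = ev g} := by
    intro k
    refine ⟨_, ?_, rfl⟩
    rw [norm_smul]
    calc ‖((2 * (k:ℝ) - N) / N)‖ * ‖g‖ ≤ 1 * 1 := by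
          apply mul_le_mul (ht k) hg (norm_nonneg _)
          exact le_trans (abs_nonneg _) (ht k)
      _ = 1 := by ring
  classical
  choose κ hκ using fun k : Fin (N+1) => hcov _ (hmem k)
  obtain ⟨k, k', hne, heq⟩ := Fintype.exists_ne_map_eq_of_card_lt κ (by simp)
  have hev : ∀ k : Fin (N+1), ev (((2 * (k:ℝ) - N) / N) • g) x = ((2 * (k:ℝ) - N) / N) * v := by
    intro k
    rw [hlin.map_smul]
    simp [hvdef]
  have h1 := hκ k x hx
  have h2 := hκ k' x hx
  rw [hev k, heq] at h1
  rw [hev k'] at h2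
  have hdist : |((2 * (k:ℝ) - N) / N) * v - ((2 * (k':ℝ) - N) / N) * v| ≤ 2 * ε := by
    calc |((2 * (k:ℝ) - N) / N) * v - ((2 * (k':ℝ) - N) / N) * v|
        ≤ |((2 * (k:ℝ) - N) / N) * v - φ (κ k') x| + |φ (κ k') x - ((2 * (k':ℝ) - N) / N) * v| :=
          abs_sub_le _ _ _
      _ ≤ ε + ε := add_le_add h1 (by rwa [abs_sub_comm])
      _ = 2 * ε := by ring
  have hsep : (2 / N) * |v| ≤ |((2 * (k:ℝ) - N) / N) * v - ((2 * (k':ℝ) - N) / N) * v| := by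
    have : ((2 * (k:ℝ) - N) / N) * v - ((2 * (k':ℝ) - N) / N) * v
        = (2 * ((k:ℝ) - (k':ℝ)) / N) * v := by
      field_simp; ring
    rw [this, abs_mul, abs_div, abs_of_pos hNR]
    have hkk : (1:ℝ) ≤ |(k:ℝ) - (k':ℝ)| := by
      have hne' : (k:ℝ) - (k':ℝ) ≠ 0 := by
        intro h
        apply hne
        have : (k:ℝ) = (k':ℝ) := by linarith
        exact_mod_cast Fin.ext (by exact_mod_cast this)
      have h2 : ((k:ℤ) - (k':ℤ)) ≠ 0 := by
        intro h; apply hne'; push_cast [sub_eq_zero] at h ⊢; exact_mod_cast h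
      have := Int.one_le_abs h2
      calc (1:ℝ) ≤ |((k:ℤ) - (k':ℤ) : ℤ)| := by exact_mod_cast this
        _ = |(k:ℝ) - (k':ℝ)| := by push_cast; ring_nf
    gcongr
    rw [abs_mul]
    have h2 : |(2:ℝ)| = 2 := by norm_num
    rw [h2]
    nlinarith [abs_nonneg ((k:ℝ) - (k':ℝ))]
  have hle : (2 / N) * |v| ≤ 2 * ε := le_trans hsep hdist
  have : |v| ≤ N * ε := by
    rw [div_mul_eq_mul_div, div_le_iff₀ hNR] at hle
    nlinarith
  nlinarith

def cellSetOf {X : Type*} (D : Set X) (F : Set (X → ℝ)) (n : ℕ) : Set ℝ :=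
  {ε : ℝ | 0 < ε ∧ ∃ φ : Fin (2 ^ (n - 1)) → (X → ℝ),
    ∀ f ∈ F, ∃ c, ∀ x ∈ D, |f x - φ c x| ≤ ε}

lemma cellSetOf_nonempty_all {X : Type*} {D : Set X} {H : Type*} [NormedAddCommGroup H]
    [InnerProductSpace ℝ H] (ev : H → X → ℝ) (hlin : IsLinearMap ℝ ev)
    {n : ℕ} (hne : (cellSetOf D {f | ∃ g : H, ‖g‖ ≤ 1 ∧ f = ev g} n).Nonempty) (n' : ℕ) :
    (cellSetOf D {f | ∃ g : H, ‖g‖ ≤ 1 ∧ f = ev g} n').Nonempty := by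
  obtain ⟨ε, hε, φ, hcov⟩ := hne
  have hN : 0 < 2 ^ (n - 1) := pow_pos two_pos _
  have hb := bound_of_cover ev hlin hN φ hε hcov
  refine ⟨2 * (2 ^ (n - 1) : ℕ) * ε, ?_, fun _ _ => 0, ?_⟩
  · have : (0:ℝ) < (2 ^ (n - 1) : ℕ) := by exact_mod_cast hN
    positivity
  · rintro f ⟨g, hg, rfl⟩
    exact ⟨⟨0, pow_pos two_pos _⟩, fun x hx => by simpa using hb g hg x hx⟩

/-- Entropy bound for the localized RKHS `H` with `‖f‖_H² = ∑_j λ_j ‖f|_{A_j}‖²_{H_j}`: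
if `e_i(id : H_j → ℓ_∞(A_j ∩ S)) ≤ a_j i^{-1/q}` for all `i` and `j`, then
`e_i(id : H → ℓ_∞(S)) ≤ (3 log 4)^{1/q} (∑_j (a_j/√λ_j)^q)^{1/q} i^{-1/q}` for all `i`.
Each `H_j` is a Hilbert space of functions on the cell `A_j`, given via a linear evaluation
`ev j : H j → (X → ℝ)`; the unit ball of `H` corresponds to families `g` with
`∑_j λ_j ‖g_j‖² ≤ 1`, glued via indicators along the partition. -/
theorem localized_entropy_bound {X : Type*} (m : ℕ)
    (P : Fin m → Set X) (hP : ∀ x : X, ∃! j, x ∈ P j) (S : Set X)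
    (lam : Fin m → ℝ) (hlam : ∀ j, 0 < lam j)
    (H : Fin m → Type*) [∀ j, NormedAddCommGroup (H j)] [∀ j, InnerProductSpace ℝ (H j)]
    (ev : ∀ j, H j → X → ℝ) (hlin : ∀ j, IsLinearMap ℝ (ev j))
    (a : Fin m → ℝ) (ha : ∀ j, 0 < a j) (q : ℝ) (hq : 0 < q)
    (hcell : ∀ (j) (i : ℕ), 0 < i →
      funEntropy (P j ∩ S) {f | ∃ g : H j, ‖g‖ ≤ 1 ∧ f = ev j g} i
        ≤ a j * (i : ℝ) ^ (-(1 / q))) :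
    ∀ i : ℕ, 0 < i →
      funEntropy S
          {f | ∃ g : ∀ j, H j, (∑ j, lam j * ‖g j‖ ^ 2) ≤ 1 ∧
            f = fun x => ∑ j, (P j).indicator (ev j (g j)) x} i
        ≤ (3 * Real.log 4) ^ (1 / q) * (∑ j, (a j / Real.sqrt (lam j)) ^ q) ^ (1 / q)
            * (i : ℝ) ^ (-(1 / q)) := by
  classical
  intro i hi
  set L : ℝ := Real.log 4 with hLdef
  have hL1 : 1 < L := by
    rw [hLdef, Real.lt_log_iff_exp_lt (by norm_num : (0:ℝ) < 4)]
    calc Real.exp 1 < 2.7182818286 := Real.exp_one_lt_d9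
      _ < 4 := by norm_num
  have hL0 : 0 < L := lt_trans one_pos hL1
  set B : ℝ := ∑ j, (a j / Real.sqrt (lam j)) ^ q with hBdef
  set T : ℝ := (3 * L) ^ (1 / q) * B ^ (1 / q) * (i : ℝ) ^ (-(1 / q)) with hTdef
  have hBnonneg : 0 ≤ B :=
    Finset.sum_nonneg fun j _ => Real.rpow_nonneg (div_nonneg (ha j).le (Real.sqrt_nonneg _)) _
  have hTnonneg : 0 ≤ T :=
    mul_nonneg (mul_nonneg (Real.rpow_nonneg (by linarith) _)
      (Real.rpow_nonneg hBnonneg _)) (Real.rpow_nonneg (Nat.cast_nonneg _) _)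
  show sInf (cellSetOf S _ i) ≤ T
  -- degenerate case: m = 0 forces X empty
  rcases Nat.eq_zero_or_pos m with hm | hm
  · have hX : IsEmpty X := by
      constructor; intro x
      obtain ⟨j, -, -⟩ := hP x
      subst hm
      exact j.elim0
    have : cellSetOf S {f | ∃ g : ∀ j, H j, (∑ j, lam j * ‖g j‖ ^ 2) ≤ 1 ∧
        f = fun x => ∑ j, (P j).indicator (ev j (g j)) x} i = Set.Ioi 0 := by
      ext ε
      constructor
      · rintro ⟨hε, -⟩; exact hε
      · intro hε
        refine ⟨hε, fun _ _ => 0, fun f _ => ⟨⟨0, pow_pos two_pos _⟩, fun x _ => (hX.false x).elim⟩⟩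
    rw [this, csInf_Ioi]
    exact hTnonneg
  -- main case
  set cF : ∀ j : Fin m, Set (X → ℝ) := fun j => {f | ∃ g : H j, ‖g‖ ≤ 1 ∧ f = ev j g}
    with hcF
  by_cases hall : ∀ j, ∃ n, (cellSetOf (P j ∩ S) (cF j) n).Nonempty
  · -- all cells admit finite covers
    have hcellNE : ∀ j (n : ℕ), (cellSetOf (P j ∩ S) (cF j) n).Nonempty := by
      intro j n
      obtain ⟨n₀, hn₀⟩ := hall j
      exact cellSetOf_nonempty_all (ev j) (hlin j) hn₀ n
    have : Nonempty (Fin m) := ⟨⟨0, hm⟩⟩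
    have hBpos : 0 < B := by
      rw [hBdef]
      exact Finset.sum_pos (fun j _ =>
        Real.rpow_pos_of_pos (div_pos (ha j) (Real.sqrt_pos.mpr (hlam j))) _)
        Finset.univ_nonempty
    have hiR : (0:ℝ) < i := by exact_mod_cast hi
    have hTpos : 0 < T := by
      rw [hTdef]
      exact mul_pos (mul_pos (Real.rpow_pos_of_pos (by linarith) _)
        (Real.rpow_pos_of_pos hBpos _)) (Real.rpow_pos_of_pos hiR _)
    set u : Fin m → ℝ := fun j => (a j / Real.sqrt (lam j) / T) ^ q with hu
    have hunonneg : ∀ j, 0 ≤ u j := fun j => Real.rpow_nonneg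
      (div_nonneg (div_nonneg (ha j).le (Real.sqrt_nonneg _)) hTpos.le) _
    set nj : Fin m → ℕ := fun j => ⌊u j⌋₊ + 1 with hnj
    have hq1 : 1 / q * q = 1 := by field_simp
    have hq1' : q * (1 / q) = 1 := by field_simp
    have hTq : T ^ q = 3 * L * B / i := by
      rw [hTdef, Real.mul_rpow
          (mul_nonneg (Real.rpow_nonneg (by linarith) _) (Real.rpow_nonneg hBnonneg _))
          (Real.rpow_nonneg (Nat.cast_nonneg _) _),
        Real.mul_rpow (Real.rpow_nonneg (by linarith) _) (Real.rpow_nonneg hBnonneg _),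
        ← Real.rpow_mul (by linarith : (0:ℝ) ≤ 3 * L), ← Real.rpow_mul hBnonneg,
        ← Real.rpow_mul (Nat.cast_nonneg i), hq1, Real.rpow_one, Real.rpow_one]
      have hm1 : -(1 / q) * q = -1 := by field_simp
      rw [hm1, Real.rpow_neg_one, div_eq_mul_inv]
    have hsumu : ∑ j, u j = i / (3 * L) := by
      have h1 : ∀ j, u j = (a j / Real.sqrt (lam j)) ^ q / T ^ q := fun j =>
        Real.div_rpow (div_nonneg (ha j).le (Real.sqrt_nonneg _)) hTpos.le q
      rw [Finset.sum_congr rfl (fun j _ => h1 j), ← Finset.sum_div, ← hBdef, hTq]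
      rw [div_div_eq_mul_div, div_eq_div_iff (by positivity) (by positivity)]
      ring
    have hcount : ∑ j, (nj j - 1) ≤ i - 1 := by
      have hfl : ∀ j, nj j - 1 = ⌊u j⌋₊ := fun j => by simp [hnj]
      have h1 : ((∑ j, (nj j - 1) : ℕ) : ℝ) ≤ ∑ j, u j := by
        push_cast [hfl]
        exact Finset.sum_le_sum fun j _ => Nat.floor_le (hunonneg j)
      have h2 : ((∑ j, (nj j - 1) : ℕ) : ℝ) < i := by
        refine lt_of_le_of_lt h1 ?_
        rw [hsumu]
        exact div_lt_self hiR (by linarith)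
      have h3 : ∑ j, (nj j - 1) < i := by exact_mod_cast h2
      omega
    have hstrict : ∀ j, a j * (nj j : ℝ) ^ (-(1 / q)) < Real.sqrt (lam j) * T := by
      intro j
      have hs := Real.sqrt_pos.mpr (hlam j)
      have hub : u j < (nj j : ℝ) := by
        have := Nat.lt_floor_add_one (u j)
        rw [hnj]
        push_cast
        linarith
      have hnjpos : (0:ℝ) < (nj j : ℝ) := lt_of_le_of_lt (hunonneg j) hub
      have hp : 0 < (nj j : ℝ) ^ (1 / q) := Real.rpow_pos_of_pos hnjpos _
      have h4 : u j ^ (1 / q) < (nj j : ℝ) ^ (1 / q) :=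
        Real.rpow_lt_rpow (hunonneg j) hub (by positivity)
      have h5 : u j ^ (1 / q) = a j / Real.sqrt (lam j) / T := by
        rw [hu, ← Real.rpow_mul
          (div_nonneg (div_nonneg (ha j).le (Real.sqrt_nonneg _)) hTpos.le),
          hq1', Real.rpow_one]
      rw [h5] at h4
      have h6 : a j < (nj j : ℝ) ^ (1 / q) * (Real.sqrt (lam j) * T) := by
        rw [div_div, div_lt_iff₀ (by positivity)] at h4
        linarith
      rw [Real.rpow_neg (Nat.cast_nonneg _), ← div_eq_mul_inv, div_lt_iff₀ hp]
      linarith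
    have hchoice : ∀ j, ∃ ε ∈ cellSetOf (P j ∩ S) (cF j) (nj j), ε < Real.sqrt (lam j) * T := by
      intro j
      have hbdd : BddBelow (cellSetOf (P j ∩ S) (cF j) (nj j)) :=
        ⟨0, fun ε hε => le_of_lt hε.1⟩
      have hinf : sInf (cellSetOf (P j ∩ S) (cF j) (nj j)) < Real.sqrt (lam j) * T :=
        lt_of_le_of_lt (hcell j (nj j) (Nat.succ_pos _)) (hstrict j)
      exact (csInf_lt_iff hbdd (hcellNE j (nj j))).mp hinf
    choose εc hεmem hεlt using hchoice
    have hφex : ∀ j, ∃ φ : Fin (2 ^ (nj j - 1)) → X → ℝ,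
        ∀ f ∈ cF j, ∃ c, ∀ x ∈ P j ∩ S, |f x - φ c x| ≤ εc j := fun j => (hεmem j).2
    choose φs hφs using hφex
    have hcard : Fintype.card (∀ j, Fin (2 ^ (nj j - 1))) ≤ 2 ^ (i - 1) := by
      rw [Fintype.card_pi]
      simp only [Fintype.card_fin]
      rw [Finset.prod_pow_eq_pow_sum]
      exact Nat.pow_le_pow_right (by norm_num) hcount
    set ι : (∀ j, Fin (2 ^ (nj j - 1))) ↪ Fin (2 ^ (i - 1)) :=
      (Fintype.equivFin _).toEmbedding.trans (Fin.castLEEmb hcard) with hι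
    set Φ : Fin (2 ^ (i - 1)) → X → ℝ := fun c =>
      if h : ∃ d, ι d = c then
        fun x => ∑ j, (P j).indicator (fun y => (Real.sqrt (lam j))⁻¹ * φs j (h.choose j) y) x
      else 0 with hΦ
    apply csInf_le ⟨0, fun ε hε => le_of_lt hε.1⟩
    refine ⟨hTpos, Φ, ?_⟩
    rintro f ⟨g, hg1, rfl⟩
    have hnorm : ∀ j, ‖Real.sqrt (lam j) • g j‖ ≤ 1 := by
      intro j
      have hterm : lam j * ‖g j‖ ^ 2 ≤ 1 := by
        refine le_trans ?_ hg1
        exact Finset.single_le_sum (f := fun j' => lam j' * ‖g j'‖ ^ 2)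
          (fun j' _ => mul_nonneg (hlam j').le (by positivity)) (Finset.mem_univ j)
      have hs := Real.sqrt_pos.mpr (hlam j)
      rw [norm_smul, Real.norm_eq_abs, abs_of_pos hs]
      nlinarith [Real.sq_sqrt (hlam j).le, Real.sqrt_nonneg (lam j), norm_nonneg (g j),
        mul_nonneg (Real.sqrt_nonneg (lam j)) (norm_nonneg (g j))]
    choose d hd using fun j => hφs j _ ⟨Real.sqrt (lam j) • g j, hnorm j, rfl⟩
    refine ⟨ι d, ?_⟩
    intro x hx
    obtain ⟨j₀, hj₀, -⟩ := hP x
    have hex : ∃ d', ι d' = ι d := ⟨d, rfl⟩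
    have hΦc : Φ (ι d) x = (Real.sqrt (lam j₀))⁻¹ * φs j₀ (d j₀) x := by
      rw [hΦ]
      simp only [dif_pos hex]
      have hch : hex.choose = d := ι.injective hex.choose_spec
      rw [hch]
      exact sum_indicator_eval P hP _ hj₀
    have hfx : (∑ j, (P j).indicator (ev j (g j)) x) = ev j₀ (g j₀) x :=
      sum_indicator_eval P hP _ hj₀
    simp only []
    rw [hfx, hΦc]
    have hs := Real.sqrt_pos.mpr (hlam j₀)
    have hdx := hd j₀ x ⟨hj₀, hx⟩
    have hevx : ev j₀ (Real.sqrt (lam j₀) • g j₀) x = Real.sqrt (lam j₀) * ev j₀ (g j₀) x := by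
      rw [(hlin j₀).map_smul]
      simp
    rw [hevx] at hdx
    have key : ev j₀ (g j₀) x - (Real.sqrt (lam j₀))⁻¹ * φs j₀ (d j₀) x
        = (Real.sqrt (lam j₀))⁻¹ * (Real.sqrt (lam j₀) * ev j₀ (g j₀) x - φs j₀ (d j₀) x) := by
      field_simp
    rw [key, abs_mul, abs_of_pos (inv_pos.mpr hs)]
    calc (Real.sqrt (lam j₀))⁻¹ * |Real.sqrt (lam j₀) * ev j₀ (g j₀) x - φs j₀ (d j₀) x|
        ≤ (Real.sqrt (lam j₀))⁻¹ * εc j₀ := mul_le_mul_of_nonneg_left hdx (inv_pos.mpr hs).le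
      _ ≤ (Real.sqrt (lam j₀))⁻¹ * (Real.sqrt (lam j₀) * T) :=
          mul_le_mul_of_nonneg_left (hεlt j₀).le (inv_pos.mpr hs).le
      _ = T := by field_simp
  · -- some cell has no finite covers at all: glued set is empty
    push_neg at hall
    obtain ⟨j, hj⟩ := hall
    have hempty : cellSetOf S {f | ∃ g : ∀ j, H j, (∑ j, lam j * ‖g j‖ ^ 2) ≤ 1 ∧
        f = fun x => ∑ j, (P j).indicator (ev j (g j)) x} i = ∅ := by
      rw [Set.eq_empty_iff_forall_notMem]
      rintro ε ⟨hε, φ, hcov⟩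
      have hs := Real.sqrt_pos.mpr (hlam j)
      apply Set.eq_empty_iff_forall_notMem.mp (hj i) (Real.sqrt (lam j) * ε)
      refine ⟨mul_pos hs hε, fun c x => Real.sqrt (lam j) * φ c x, ?_⟩
      rintro f ⟨g, hg, rfl⟩
      set g' : ∀ j', H j' := Function.update (fun j' => (0 : H j')) j ((Real.sqrt (lam j))⁻¹ • g)
        with hg'
      have hsum : (∑ j', lam j' * ‖g' j'‖ ^ 2) ≤ 1 := by
        rw [Finset.sum_eq_single j]
        · rw [hg', Function.update_self, norm_smul, mul_pow, norm_inv,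
            Real.norm_eq_abs, abs_of_pos hs, inv_pow, Real.sq_sqrt (hlam j).le]
          calc lam j * ((lam j)⁻¹ * ‖g‖ ^ 2) = ‖g‖ ^ 2 := by
                rw [← mul_assoc, mul_inv_cancel₀ (hlam j).ne', one_mul]
            _ ≤ 1 := by nlinarith [norm_nonneg g]
        · intro j' _ hne
          rw [hg', Function.update_of_ne hne]
          simp
        · intro habs; exact absurd (Finset.mem_univ j) habs
      obtain ⟨c, hc⟩ := hcov _ ⟨g', hsum, rfl⟩
      refine ⟨c, ?_⟩
      rintro x ⟨hxP, hxS⟩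
      have hcx := hc x hxS
      rw [sum_indicator_eval P hP _ hxP] at hcx
      have : ev j (g' j) x = (Real.sqrt (lam j))⁻¹ * ev j g x := by
        rw [hg', Function.update_self, (hlin j).map_smul]
        simp
      rw [this] at hcx
      have heq2 : ev j g x - Real.sqrt (lam j) * φ c x
          = Real.sqrt (lam j) * ((Real.sqrt (lam j))⁻¹ * ev j g x - φ c x) := by
        field_simp
      calc |ev j g x - Real.sqrt (lam j) * φ c x|
          = Real.sqrt (lam j) * |(Real.sqrt (lam j))⁻¹ * ev j g x - φ c x| := by
            rw [heq2, abs_mul, abs_of_pos hs]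
        _ ≤ Real.sqrt (lam j) * ε := by
            apply mul_le_mul_of_nonneg_left hcx hs.le
    rw [hempty, Real.sInf_empty]
    exact hTnonneg
end
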